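/- Let θ > 0 and c ≥ 0. There exist constants C > 0 and h₀ ∈ (0,1], depending only on θ and c, such that for every h ∈ (0, h₀] the following holds: let ξ₁, ξ₂ ∈ ℝ² span a triangle with vertices 0, ξ₁, ξ₂ all of whose side lengths lie in [θh, h] and with |det(ξ₁, ξ₂)| ≥ θh², and let ψ₁, ψ₂ ∈ ℝ³ satisfy |ψᵢ(j) − ξᵢ(j)| ≤ c h³ for j = 1, 2 and |ψᵢ(3)| ≤ c h² for i = 1, 2. Let Γ be the unique real 3×2 matrix with Γ ξᵢ = ψᵢ for i = 1, 2, and g_Γ = Γᵀ Γ. Then | √(det g_Γ) − 1 | ≤ C h². -/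

import Mathlib

open Matrix

lemma coord_abs_le_norm {n : ℕ} (x : EuclideanSpace ℝ (Fin n)) (i : Fin n) :
    |x i| ≤ ‖x‖ := by
  rw [EuclideanSpace.norm_eq]
  have h1 : |x i| = Real.sqrt (‖x i‖ ^ 2) := by
    rw [Real.sqrt_sq (norm_nonneg _)]; simp [Real.norm_eq_abs]
  rw [h1]
  apply Real.sqrt_le_sqrt
  exact Finset.single_le_sum (f := fun j => ‖x j‖ ^ 2)
    (fun j _ => by positivity) (Finset.mem_univ i)

lemma abs_mul_le' {u v a b : ℝ} (hu : |u| ≤ a) (hv : |v| ≤ b) : |u * v| ≤ a * b := by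
  rw [abs_mul]
  exact mul_le_mul hu hv (abs_nonneg _) (le_trans (abs_nonneg _) hu)

set_option maxHeartbeats 1600000 in
/-- Proposition 3.6(i): supercloseness of the metric determinant. -/
theorem metric_det_supercloseness
    (θ c : ℝ) (hθ : 0 < θ) (hc : 0 ≤ c) :
    ∃ C > (0 : ℝ), ∃ h₀ > (0 : ℝ), h₀ ≤ 1 ∧
      ∀ h : ℝ, 0 < h → h ≤ h₀ →
        ∀ (ξ₁ ξ₂ : EuclideanSpace ℝ (Fin 2)) (ψ₁ ψ₂ : EuclideanSpace ℝ (Fin 3))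
          (Γ : Matrix (Fin 3) (Fin 2) ℝ),
          θ * h ≤ ‖ξ₁‖ → ‖ξ₁‖ ≤ h →
          θ * h ≤ ‖ξ₂‖ → ‖ξ₂‖ ≤ h →
          θ * h ≤ ‖ξ₂ - ξ₁‖ → ‖ξ₂ - ξ₁‖ ≤ h →
          θ * h ^ 2 ≤ |ξ₁ 0 * ξ₂ 1 - ξ₁ 1 * ξ₂ 0| →
          |ψ₁ 0 - ξ₁ 0| ≤ c * h ^ 3 → |ψ₁ 1 - ξ₁ 1| ≤ c * h ^ 3 →
          |ψ₂ 0 - ξ₂ 0| ≤ c * h ^ 3 → |ψ₂ 1 - ξ₂ 1| ≤ c * h ^ 3 →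
          |ψ₁ 2| ≤ c * h ^ 2 → |ψ₂ 2| ≤ c * h ^ 2 →
          Γ.mulVec ξ₁ = ψ₁ → Γ.mulVec ξ₂ = ψ₂ →
          |Real.sqrt (Γᵀ * Γ).det - 1| ≤ C * h ^ 2 := by
  set K₁ : ℝ := 2 * c * (2 + c) with hK₁def
  set K₂ : ℝ := 2 * c * (1 + c) with hK₂def
  set M : ℝ := K₁ * (K₁ + 4) + 2 * K₂ ^ 2 with hMdef
  have hK₁ : 0 ≤ K₁ := by nlinarith
  have hK₂ : 0 ≤ K₂ := by nlinarith
  have hM : 0 ≤ M := by nlinarith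
  refine ⟨(M + 1) / θ ^ 2, div_pos (by linarith) (by positivity), 1, one_pos, le_refl _, ?_⟩
  intro h hh hh1 ξ₁ ξ₂ ψ₁ ψ₂ Γ _ hn1 _ hn2 _ _ hdet hd10 hd11 hd20 hd21 hz1 hz2 hΓ1 hΓ2
  set C : ℝ := (M + 1) / θ ^ 2 with hCdef
  set D : ℝ := ξ₁ 0 * ξ₂ 1 - ξ₁ 1 * ξ₂ 0 with hDdef
  set A : ℝ := ψ₁ 0 * ψ₂ 1 - ψ₁ 1 * ψ₂ 0 with hAdef
  set B : ℝ := ψ₁ 0 * ψ₂ 2 - ψ₁ 2 * ψ₂ 0 with hBdef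
  set E : ℝ := ψ₁ 1 * ψ₂ 2 - ψ₁ 2 * ψ₂ 1 with hEdef
  -- key algebraic identity
  have key : D ^ 2 * (Γᵀ * Γ).det = A ^ 2 + B ^ 2 + E ^ 2 := by
    have e1 := fun k => congrFun hΓ1 k
    have e2 := fun k => congrFun hΓ2 k
    simp only [Matrix.mulVec, dotProduct, Fin.sum_univ_two] at e1 e2
    rw [Matrix.det_fin_two]
    simp only [Matrix.mul_apply, Matrix.transpose_apply, Fin.sum_univ_three]
    rw [hAdef, hBdef, hEdef, ← e1 0, ← e1 1, ← e1 2, ← e2 0, ← e2 1, ← e2 2, hDdef]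
    ring
  -- basic bounds
  have hh3 : h ^ 3 ≤ h := by
    calc h ^ 3 ≤ h ^ 1 := pow_le_pow_of_le_one hh.le hh1 (by norm_num)
      _ = h := pow_one h
  have hch3 : c * h ^ 3 ≤ c * h := mul_le_mul_of_nonneg_left hh3 hc
  have hDpos : 0 < |D| := lt_of_lt_of_le (by positivity) hdet
  have hDne : D ≠ 0 := fun h0 => by simp [h0] at hDpos
  have hx10 : |ξ₁ 0| ≤ h := (coord_abs_le_norm ξ₁ 0).trans hn1
  have hx11 : |ξ₁ 1| ≤ h := (coord_abs_le_norm ξ₁ 1).trans hn1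
  have hx20 : |ξ₂ 0| ≤ h := (coord_abs_le_norm ξ₂ 0).trans hn2
  have hx21 : |ξ₂ 1| ≤ h := (coord_abs_le_norm ξ₂ 1).trans hn2
  have tri : ∀ p q : ℝ, |p| ≤ |p - q| + |q| := fun p q => by
    have := abs_add_le (p - q) q; simpa using this
  have hp10 : |ψ₁ 0| ≤ (1 + c) * h := by
    have := tri (ψ₁ 0) (ξ₁ 0); have e : (1 + c) * h = h + c * h := by ring
    rw [e]; linarith
  have hp11 : |ψ₁ 1| ≤ (1 + c) * h := by
    have := tri (ψ₁ 1) (ξ₁ 1); have e : (1 + c) * h = h + c * h := by ring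
    rw [e]; linarith
  have hp20 : |ψ₂ 0| ≤ (1 + c) * h := by
    have := tri (ψ₂ 0) (ξ₂ 0); have e : (1 + c) * h = h + c * h := by ring
    rw [e]; linarith
  have hp21 : |ψ₂ 1| ≤ (1 + c) * h := by
    have := tri (ψ₂ 1) (ξ₂ 1); have e : (1 + c) * h = h + c * h := by ring
    rw [e]; linarith
  -- |A - D| ≤ K₁ h⁴
  have hAD : |A - D| ≤ K₁ * h ^ 4 := by
    have heq : A - D = (ψ₁ 0 - ξ₁ 0) * ψ₂ 1 + ξ₁ 0 * (ψ₂ 1 - ξ₂ 1)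
        - ((ψ₁ 1 - ξ₁ 1) * ψ₂ 0 + ξ₁ 1 * (ψ₂ 0 - ξ₂ 0)) := by
      rw [hAdef, hDdef]; ring
    calc |A - D| = |(ψ₁ 0 - ξ₁ 0) * ψ₂ 1 + ξ₁ 0 * (ψ₂ 1 - ξ₂ 1)
        - ((ψ₁ 1 - ξ₁ 1) * ψ₂ 0 + ξ₁ 1 * (ψ₂ 0 - ξ₂ 0))| := by rw [heq]
      _ ≤ |(ψ₁ 0 - ξ₁ 0) * ψ₂ 1| + |ξ₁ 0 * (ψ₂ 1 - ξ₂ 1)|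
          + (|(ψ₁ 1 - ξ₁ 1) * ψ₂ 0| + |ξ₁ 1 * (ψ₂ 0 - ξ₂ 0)|) :=
        (abs_sub _ _).trans (by gcongr <;> exact abs_add_le _ _)
      _ ≤ c * h ^ 3 * ((1 + c) * h) + h * (c * h ^ 3)
          + (c * h ^ 3 * ((1 + c) * h) + h * (c * h ^ 3)) := by
        gcongr ?_ + ?_ + (?_ + ?_) <;> exact abs_mul_le' (by assumption) (by assumption)
      _ = (2 * c * (2 + c)) * h ^ 4 := by ring
  have hB : |B| ≤ K₂ * h ^ 3 := by
    calc |B| ≤ |ψ₁ 0 * ψ₂ 2| + |ψ₁ 2 * ψ₂ 0| := abs_sub _ _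
      _ ≤ (1 + c) * h * (c * h ^ 2) + c * h ^ 2 * ((1 + c) * h) := by
        gcongr ?_ + ?_ <;> exact abs_mul_le' (by assumption) (by assumption)
      _ = (2 * c * (1 + c)) * h ^ 3 := by ring
  have hE : |E| ≤ K₂ * h ^ 3 := by
    calc |E| ≤ |ψ₁ 1 * ψ₂ 2| + |ψ₁ 2 * ψ₂ 1| := abs_sub _ _
      _ ≤ (1 + c) * h * (c * h ^ 2) + c * h ^ 2 * ((1 + c) * h) := by
        gcongr ?_ + ?_ <;> exact abs_mul_le' (by assumption) (by assumption)
      _ = (2 * c * (1 + c)) * h ^ 3 := by ring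
  have hDub : |D| ≤ 2 * h ^ 2 := by
    calc |D| ≤ |ξ₁ 0 * ξ₂ 1| + |ξ₁ 1 * ξ₂ 0| := abs_sub _ _
      _ ≤ h * h + h * h := by
        gcongr ?_ + ?_ <;> exact abs_mul_le' (by assumption) (by assumption)
      _ = 2 * h ^ 2 := by ring
  -- numerator bound
  have hnum : |A ^ 2 + B ^ 2 + E ^ 2 - D ^ 2| ≤ M * h ^ 6 := by
    have hAD2 : |A + D| ≤ K₁ * h ^ 4 + 4 * h ^ 2 := by
      have heq2 : A + D = (A - D) + 2 * D := by ring
      rw [heq2]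
      calc |(A - D) + 2 * D| ≤ |A - D| + |2 * D| := abs_add_le _ _
        _ ≤ K₁ * h ^ 4 + 2 * (2 * h ^ 2) := by
          refine add_le_add hAD ?_
          rw [abs_mul, abs_two]; linarith
        _ = K₁ * h ^ 4 + 4 * h ^ 2 := by ring
    have h1 : |(A - D) * (A + D)| ≤ K₁ * h ^ 4 * (K₁ * h ^ 4 + 4 * h ^ 2) :=
      abs_mul_le' hAD hAD2
    have hB2 : B ^ 2 ≤ (K₂ * h ^ 3) ^ 2 := by
      rw [← sq_abs]; exact pow_le_pow_left₀ (abs_nonneg _) hB 2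
    have hE2 : E ^ 2 ≤ (K₂ * h ^ 3) ^ 2 := by
      rw [← sq_abs]; exact pow_le_pow_left₀ (abs_nonneg _) hE 2
    have heq : A ^ 2 + B ^ 2 + E ^ 2 - D ^ 2 = (A - D) * (A + D) + B ^ 2 + E ^ 2 := by ring
    have h86 : h ^ 8 ≤ h ^ 6 := pow_le_pow_of_le_one hh.le hh1 (by norm_num)
    calc |A ^ 2 + B ^ 2 + E ^ 2 - D ^ 2|
        = |(A - D) * (A + D) + B ^ 2 + E ^ 2| := by rw [heq]
      _ ≤ |(A - D) * (A + D)| + B ^ 2 + E ^ 2 := by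
          have t1 := abs_add_le ((A - D) * (A + D) + B ^ 2) (E ^ 2)
          have t2 := abs_add_le ((A - D) * (A + D)) (B ^ 2)
          have eB : |B ^ 2| = B ^ 2 := abs_of_nonneg (sq_nonneg B)
          have eE : |E ^ 2| = E ^ 2 := abs_of_nonneg (sq_nonneg E)
          linarith
      _ ≤ K₁ * h ^ 4 * (K₁ * h ^ 4 + 4 * h ^ 2) + (K₂ * h ^ 3) ^ 2 + (K₂ * h ^ 3) ^ 2 := by
          gcongr
      _ = K₁ ^ 2 * h ^ 8 + (4 * K₁ + 2 * K₂ ^ 2) * h ^ 6 := by ring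
      _ ≤ K₁ ^ 2 * h ^ 6 + (4 * K₁ + 2 * K₂ ^ 2) * h ^ 6 := by
          have := mul_le_mul_of_nonneg_left h86 (sq_nonneg K₁); linarith
      _ = M * h ^ 6 := by rw [hMdef]; ring
  -- conclude
  have hD4 : θ ^ 2 * h ^ 4 ≤ D ^ 2 := by
    have h1 := pow_le_pow_left₀ (by positivity) hdet 2
    rw [sq_abs] at h1
    calc θ ^ 2 * h ^ 4 = (θ * h ^ 2) ^ 2 := by ring
      _ ≤ D ^ 2 := h1
  have hdetval : (Γᵀ * Γ).det = (A ^ 2 + B ^ 2 + E ^ 2) / D ^ 2 := by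
    field_simp
    linear_combination key
  have hnn : 0 ≤ (Γᵀ * Γ).det := by
    rw [hdetval]; positivity
  have hsqrt : |Real.sqrt (Γᵀ * Γ).det - 1| ≤ |(Γᵀ * Γ).det - 1| := by
    set x := (Γᵀ * Γ).det with hx
    have hs : Real.sqrt x ^ 2 = x := Real.sq_sqrt hnn
    have hfac : (Real.sqrt x - 1) * (Real.sqrt x + 1) = x - 1 := by
      linear_combination hs
    have hs0 := Real.sqrt_nonneg x
    calc |Real.sqrt x - 1| ≤ |Real.sqrt x - 1| * (Real.sqrt x + 1) :=
        le_mul_of_one_le_right (abs_nonneg _) (by linarith)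
      _ = |(Real.sqrt x - 1) * (Real.sqrt x + 1)| := by
        rw [abs_mul, abs_of_nonneg (show (0:ℝ) ≤ Real.sqrt x + 1 by linarith)]
      _ = |x - 1| := by rw [hfac]
  refine hsqrt.trans ?_
  have hdiff : (Γᵀ * Γ).det - 1 = (A ^ 2 + B ^ 2 + E ^ 2 - D ^ 2) / D ^ 2 := by
    rw [hdetval]; field_simp
  rw [hdiff, abs_div, abs_of_nonneg (sq_nonneg D)]
  rw [div_le_iff₀ (by positivity)]
  have hC0 : 0 ≤ C := by rw [hCdef]; positivity
  calc |A ^ 2 + B ^ 2 + E ^ 2 - D ^ 2| ≤ M * h ^ 6 := hnum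
    _ ≤ (M + 1) * h ^ 6 :=
        mul_le_mul_of_nonneg_right (by linarith) (by positivity)
    _ = (M + 1) / θ ^ 2 * h ^ 2 * (θ ^ 2 * h ^ 4) := by field_simp
    _ ≤ C * h ^ 2 * D ^ 2 := by
        rw [hCdef]
        exact mul_le_mul_of_nonneg_left hD4 (by positivity)
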